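/- Let R be a commutative ring, M an R-module, A = (a_{ij}) a k×l matrix over R, and b ∈ M^k nonzero. Set a_i = Σ_j a_{ij} and I = (a₁,...,a_k)R. Assume H_R(I,M) = 0, i.e., every φ ∈ Hom_R(I,M) with φ(t) ∈ tM for all t ∈ I is of the form φ(t) = tm. Then the system Am = b is partition regular over M if and only if it has a constant solution m = (m,...,m) in M. -/

import Mathlib

open BigOperators

/-- A matrix `A` over `S` is partition regular over the `S`-module `M` for `r` colours if
every colouring of `M` with `r` colours admits a nonzero monochromatic solution of `A m = 0`. -/
def IsPR {S : Type*} [CommRing S] {k l : ℕ} (A : Matrix (Fin k) (Fin l) S)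
    (M : Type*) [AddCommGroup M] [Module S M] (r : ℕ) : Prop :=
  ∀ χ : M → Fin r, ∃ m : Fin l → M, m ≠ 0 ∧
    (∀ i, ∑ j, A i j • m j = 0) ∧ ∀ j j', χ (m j) = χ (m j')

/-- Partition regularity for every (positive) finite number of colours. -/
def IsPRAll {S : Type*} [CommRing S] {k l : ℕ} (A : Matrix (Fin k) (Fin l) S)
    (M : Type*) [AddCommGroup M] [Module S M] : Prop :=
  ∀ r : ℕ, 1 ≤ r → IsPR A M r

/-- Representative in `[0,1)` of an element of `ℚ/ℤ`. -/
noncomputable def prRho : AddCircle (1:ℚ) → ℚ :=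
  fun x => ((AddCircle.equivIco 1 0 x : Set.Ico (0:ℚ) (0+1)) : ℚ)

lemma prRho_coe (x : AddCircle (1:ℚ)) : (prRho x : AddCircle (1:ℚ)) = x :=
  (AddCircle.equivIco 1 0).symm_apply_apply x

lemma prRho_mem (x : AddCircle (1:ℚ)) : prRho x ∈ Set.Ico (0:ℚ) 1 := by
  have := (AddCircle.equivIco (1:ℚ) 0 x).2
  simpa [prRho] using this

lemma prInt_of_coe_eq {r s : ℚ} (h : (r : AddCircle (1:ℚ)) = (s : AddCircle (1:ℚ))) :
    ∃ n : ℤ, r - s = n := by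
  have := QuotientAddGroup.eq.mp h
  rw [AddSubgroup.mem_zmultiples_iff] at this
  obtain ⟨n, hn⟩ := this
  exact ⟨-n, by rw [zsmul_one] at hn; push_cast; linarith⟩

/-- Key single-combination lemma: if the nonhomogeneous system `Am = b` has monochromatic
solutions for every finite colouring, then every linear combination of the rows satisfies the
single-equation criterion `∑ cᵢ bᵢ ∈ (∑ cᵢ aᵢ) M`. -/
lemma pr_key_combo {R : Type*} [CommRing R] {k l : ℕ}
    (M : Type*) [AddCommGroup M] [Module R M]
    (A : Matrix (Fin k) (Fin l) R) (b : Fin k → M)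
    (hyp : ∀ (r : ℕ), 1 ≤ r → ∀ χ : M → Fin r, ∃ m : Fin l → M,
        (∀ j j', χ (m j) = χ (m j')) ∧ ∀ i, ∑ j, A i j • m j = b i)
    (c : Fin k → R) :
    ∃ m : M, ∑ i, c i • b i = (∑ i, c i * ∑ j, A i j) • m := by
  classical
  set t : R := ∑ i, c i * ∑ j, A i j with ht
  set v : M := ∑ i, c i • b i with hv
  set d : Fin l → R := fun j => ∑ i, c i * A i j with hdd
  -- any solution of the system solves the combined equation
  have hd : ∀ (m : Fin l → M), (∀ i, ∑ j, A i j • m j = b i) → ∑ j, d j • m j = v := by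
    intro m hm
    calc ∑ j, d j • m j = ∑ j, ∑ i, (c i * A i j) • m j := by
          simp [hdd, Finset.sum_smul]
      _ = ∑ i, ∑ j, c i • (A i j • m j) := by
          rw [Finset.sum_comm]
          simp [mul_smul]
      _ = v := by
          simp only [← Finset.smul_sum]
          rw [hv]
          exact Finset.sum_congr rfl fun i _ => by rw [hm i]
  have htsum : t = ∑ j, d j := by
    rw [ht, hdd]
    simp_rw [Finset.mul_sum]
    exact Finset.sum_comm
  have hts : ∀ x : M, t • x = ∑ j, d j • x := by
    intro x; rw [htsum, Finset.sum_smul]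
  -- trivial case: no variables
  by_cases hl : l = 0
  · obtain ⟨m0, -, hs0⟩ := hyp 1 le_rfl (fun _ => 0)
    have h0 := hd m0 hs0
    subst hl
    refine ⟨0, ?_⟩
    rw [smul_zero, ← h0]
    simp
  have hlpos : 0 < l := Nat.pos_of_ne_zero hl
  by_contra hvt
  push_neg at hvt
  -- pass to the quotient M / tM and pick a character not vanishing on v
  set T : AddSubgroup M := (DistribMulAction.toAddMonoidHom M t).range with hT
  set π : M →+ M ⧸ T := QuotientAddGroup.mk' T with hπ
  have hπt : ∀ x : M, π (t • x) = 0 := by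
    intro x
    rw [hπ, QuotientAddGroup.mk'_apply, QuotientAddGroup.eq_zero_iff]
    exact ⟨x, rfl⟩
  have hπv : π v ≠ 0 := by
    intro h
    rw [hπ, QuotientAddGroup.mk'_apply, QuotientAddGroup.eq_zero_iff] at h
    obtain ⟨x, hx⟩ := h
    exact hvt x hx.symm
  obtain ⟨f, hf⟩ := CharacterModule.exists_character_apply_ne_zero_of_ne_zero hπv
  set g : M → AddCircle (1:ℚ) := fun x => f (π x) with hg
  have hgadd : ∀ (s : Finset (Fin l)) (u : Fin l → M),
      g (∑ j ∈ s, u j) = ∑ j ∈ s, g (u j) := by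
    intro s u
    rw [hg]
    simp only [map_sum]
  have hgt : ∀ x : M, g (t • x) = 0 := by
    intro x; rw [hg]; simp only [hπt x, map_zero]
  have hgv : g v ≠ 0 := hf
  -- the representative of g v
  set r : ℚ := prRho (g v) with hr
  have hrv : (r : AddCircle (1:ℚ)) = g v := prRho_coe _
  have hr0 : 0 < r := by
    rcases lt_or_eq_of_le (prRho_mem (g v)).1 with h | h
    · exact h
    · exfalso; apply hgv
      rw [← hrv]
      have hz : r = 0 := h.symm
      rw [hz]; norm_cast
  have hr1 : r < 1 := (prRho_mem (g v)).2
  -- choose the number of arcs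
  obtain ⟨K, hK⟩ := exists_nat_gt (max ((l:ℚ)/r) ((l:ℚ)/(1-r)))
  have hK1 : (l:ℚ) < K * r := by
    have := lt_of_le_of_lt (le_max_left ((l:ℚ)/r) ((l:ℚ)/(1-r))) hK
    rw [div_lt_iff₀ hr0] at this; linarith
  have hK2 : (l:ℚ) < K * (1-r) := by
    have := lt_of_le_of_lt (le_max_right ((l:ℚ)/r) ((l:ℚ)/(1-r))) hK
    rw [div_lt_iff₀ (by linarith : (0:ℚ) < 1 - r)] at this; linarith
  have hKpos : 0 < K := by
    by_contra h
    push_neg at h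
    interval_cases K
    simp only [Nat.cast_zero, zero_mul] at hK1
    have : (0:ℚ) ≤ l := Nat.cast_nonneg l
    linarith
  have hKQ : (0:ℚ) < K := by exact_mod_cast hKpos
  -- the arc colouring of the circle
  have harcbound : ∀ x : AddCircle (1:ℚ), (⌊(K:ℚ) * prRho x⌋).toNat < K := by
    intro x
    have h1 : (0:ℤ) ≤ ⌊(K:ℚ) * prRho x⌋ :=
      Int.floor_nonneg.2 (mul_nonneg (le_of_lt hKQ) (prRho_mem x).1)
    have h2 : ⌊(K:ℚ) * prRho x⌋ < (K:ℤ) := by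
      rw [Int.floor_lt]
      push_cast
      calc (K:ℚ) * prRho x < K * 1 := mul_lt_mul_of_pos_left (prRho_mem x).2 hKQ
        _ = K := mul_one _
    omega
  set arc : AddCircle (1:ℚ) → Fin K := fun x => ⟨(⌊(K:ℚ) * prRho x⌋).toNat, harcbound x⟩
    with harc
  have harc_close : ∀ x y : AddCircle (1:ℚ), arc x = arc y →
      |prRho x - prRho y| < 1 / K := by
    intro x y hxy
    rw [harc] at hxy
    have h1 : (0:ℤ) ≤ ⌊(K:ℚ) * prRho x⌋ :=
      Int.floor_nonneg.2 (mul_nonneg (le_of_lt hKQ) (prRho_mem x).1)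
    have h2 : (0:ℤ) ≤ ⌊(K:ℚ) * prRho y⌋ :=
      Int.floor_nonneg.2 (mul_nonneg (le_of_lt hKQ) (prRho_mem y).1)
    have h3 : (⌊(K:ℚ) * prRho x⌋).toNat = (⌊(K:ℚ) * prRho y⌋).toNat := by
      simpa using congrArg Fin.val hxy
    have hfl : ⌊(K:ℚ) * prRho x⌋ = ⌊(K:ℚ) * prRho y⌋ := by omega
    have habs : |(K:ℚ) * prRho x - (K:ℚ) * prRho y| < 1 :=
      Int.abs_sub_lt_one_of_floor_eq_floor hfl
    rw [← mul_sub, abs_mul, abs_of_pos hKQ] at habs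
    rw [lt_div_iff₀ hKQ]
    linarith [mul_comm (K:ℚ) |prRho x - prRho y|]
  -- the colouring of M
  set χ : M → Fin (K ^ l) :=
    fun x => finFunctionFinEquiv (fun j => arc (g (d j • x))) with hχ
  have hKl : 1 ≤ K ^ l := Nat.one_le_iff_ne_zero.2 (pow_ne_zero l hKpos.ne')
  obtain ⟨m, hmono, hsol⟩ := hyp (K ^ l) hKl χ
  have hveq : ∑ j, d j • m j = v := hd m hsol
  set j₀ : Fin l := ⟨0, hlpos⟩ with hj₀
  -- same colour gives same arcs
  have harcs : ∀ j : Fin l, arc (g (d j • m j)) = arc (g (d j • m j₀)) := by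
    intro j
    have h := hmono j j₀
    rw [hχ] at h
    have h' := finFunctionFinEquiv.injective h
    exact congrFun h' j
  -- compute g v as a sum of small elements
  have hgv1 : g v = ∑ j, g (d j • m j) := by
    rw [← hveq]; exact hgadd _ _
  have hgv2 : (0 : AddCircle (1:ℚ)) = ∑ j, g (d j • m j₀) := by
    rw [← hgt (m j₀), hts (m j₀)]; exact hgadd _ _
  have hgv3 : g v = ∑ j, (g (d j • m j) - g (d j • m j₀)) := by
    rw [Finset.sum_sub_distrib, ← hgv1, ← hgv2, sub_zero]
  set s : ℚ := ∑ j, (prRho (g (d j • m j)) - prRho (g (d j • m j₀))) with hs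
  have hscoe : (s : AddCircle (1:ℚ)) = g v := by
    rw [hgv3, hs]
    have hmap : ((∑ j, (prRho (g (d j • m j)) - prRho (g (d j • m j₀))) : ℚ) :
        AddCircle (1:ℚ)) =
        ∑ j, (((prRho (g (d j • m j)) - prRho (g (d j • m j₀))) : ℚ) : AddCircle (1:ℚ)) :=
      map_sum (QuotientAddGroup.mk' (AddSubgroup.zmultiples (1:ℚ))) _ _
    rw [hmap]
    refine Finset.sum_congr rfl fun j _ => ?_
    have hsub : ((prRho (g (d j • m j)) - prRho (g (d j • m j₀)) : ℚ) : AddCircle (1:ℚ)) =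
        ((prRho (g (d j • m j)) : ℚ) : AddCircle (1:ℚ)) -
        ((prRho (g (d j • m j₀)) : ℚ) : AddCircle (1:ℚ)) :=
      map_sub (QuotientAddGroup.mk' (AddSubgroup.zmultiples (1:ℚ))) _ _
    rw [hsub, prRho_coe, prRho_coe]
  -- bound on s
  have hterm : ∀ j : Fin l, |prRho (g (d j • m j)) - prRho (g (d j • m j₀))| < 1 / K :=
    fun j => harc_close _ _ (harcs j)
  have hne : (Finset.univ : Finset (Fin l)).Nonempty := ⟨j₀, Finset.mem_univ _⟩
  have hsb : |s| < l / K := by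
    calc |s| ≤ ∑ j, |prRho (g (d j • m j)) - prRho (g (d j • m j₀))| :=
          Finset.abs_sum_le_sum_abs _ _
      _ < ∑ _j : Fin l, (1/K : ℚ) :=
          Finset.sum_lt_sum_of_nonempty hne (fun j _ => hterm j)
      _ = l / K := by
          rw [Finset.sum_const, Finset.card_univ, Fintype.card_fin, nsmul_eq_mul]
          ring
  -- derive the contradiction
  obtain ⟨n, hn⟩ := prInt_of_coe_eq (hrv.trans hscoe.symm)
  have habs := abs_lt.1 hsb
  have hlK1 : (l:ℚ)/K < r := by rw [div_lt_iff₀ hKQ]; linarith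
  have hlK2 : (l:ℚ)/K < 1 - r := by rw [div_lt_iff₀ hKQ]; linarith
  have h0n : (0:ℚ) < n := by rw [← hn]; linarith
  have h1n : (n:ℚ) < 1 := by rw [← hn]; linarith
  have h0n' : (0:ℤ) < n := by exact_mod_cast h0n
  have h1n' : (n:ℤ) < 1 := by exact_mod_cast h1n
  omega

theorem nonhom_system_pr_iff_constant {R : Type*} [CommRing R] {k l : ℕ}
    (M : Type*) [AddCommGroup M] [Module R M]
    (A : Matrix (Fin k) (Fin l) R) (b : Fin k → M) (hb : b ≠ 0)
    (hH : ∀ φ : (Ideal.span (Set.range fun i : Fin k => ∑ j, A i j)) →ₗ[R] M,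
      (∀ t : (Ideal.span (Set.range fun i : Fin k => ∑ j, A i j)),
        ∃ m : M, φ t = (t : R) • m) →
      ∃ m : M, ∀ t : (Ideal.span (Set.range fun i : Fin k => ∑ j, A i j)),
        φ t = (t : R) • m) :
    (∀ (r : ℕ), 1 ≤ r → ∀ χ : M → Fin r, ∃ m : Fin l → M,
        (∀ j j', χ (m j) = χ (m j')) ∧ ∀ i, ∑ j, A i j • m j = b i) ↔
      (∃ m : M, ∀ i, ∑ j, A i j • m = b i) := by
  classical
  constructor
  · intro hyp
    have key := pr_key_combo M A b hyp
    -- well-definedness of the linear combination map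
    have wd : ∀ c c' : Fin k → R, ∑ i, c i * (∑ j, A i j) = ∑ i, c' i * (∑ j, A i j) →
        ∑ i, c i • b i = ∑ i, c' i • b i := by
      intro c c' h
      obtain ⟨m, hm⟩ := key (c - c')
      have h0 : ∑ i, (c - c') i * (∑ j, A i j) = 0 := by
        simp only [Pi.sub_apply, sub_mul, Finset.sum_sub_distrib, h, sub_self]
      rw [h0, zero_smul] at hm
      have h1 : ∑ i, (c - c') i • b i = (∑ i, c i • b i) - ∑ i, c' i • b i := by
        simp only [Pi.sub_apply, sub_smul, Finset.sum_sub_distrib]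
      rw [h1] at hm
      exact sub_eq_zero.mp hm
    -- coefficients for each element of the ideal
    have hmem : ∀ t : (Ideal.span (Set.range fun i : Fin k => ∑ j, A i j)),
        ∃ c : Fin k → R, ∑ i, c i • (∑ j, A i j) = (t : R) :=
      fun t => (Submodule.mem_span_range_iff_exists_fun R).mp t.2
    choose co hco using hmem
    set φfun : (Ideal.span (Set.range fun i : Fin k => ∑ j, A i j)) → M :=
      fun t => ∑ i, co t i • b i with hφf
    have hwd : ∀ (t : (Ideal.span (Set.range fun i : Fin k => ∑ j, A i j)))
        (c : Fin k → R), ∑ i, c i * (∑ j, A i j) = (t : R) →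
        φfun t = ∑ i, c i • b i := by
      intro t c h
      refine wd (co t) c ?_
      have := hco t
      simp only [smul_eq_mul] at this
      rw [this, h]
    set φ : (Ideal.span (Set.range fun i : Fin k => ∑ j, A i j)) →ₗ[R] M :=
      { toFun := φfun
        map_add' := by
          intro t s
          have h1 : ∑ i, (co t + co s) i * (∑ j, A i j) = ((t + s : _) : R) := by
            have ht := hco t; have hs := hco s
            simp only [smul_eq_mul] at ht hs
            simp only [Pi.add_apply, add_mul, Finset.sum_add_distrib, ht, hs]
            rfl
          rw [hwd (t + s) (co t + co s) h1]
          simp only [Pi.add_apply, add_smul, Finset.sum_add_distrib]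
          rfl
        map_smul' := by
          intro a t
          have h1 : ∑ i, (a • co t) i * (∑ j, A i j) = ((a • t : _) : R) := by
            have ht := hco t
            simp only [smul_eq_mul] at ht
            simp only [Pi.smul_apply, smul_eq_mul, mul_assoc, ← Finset.mul_sum, ht]
            rfl
          show φfun (a • t) = a • φfun t
          rw [hwd (a • t) (a • co t) h1]
          simp only [Pi.smul_apply, smul_eq_mul, mul_smul, ← Finset.smul_sum]
          rfl } with hφ
    have hφhyp : ∀ t : (Ideal.span (Set.range fun i : Fin k => ∑ j, A i j)),
        ∃ m : M, φ t = (t : R) • m := by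
      intro t
      obtain ⟨m, hm⟩ := key (co t)
      refine ⟨m, ?_⟩
      show (∑ i, co t i • b i) = (t : R) • m
      have ht := hco t
      simp only [smul_eq_mul] at ht
      rw [hm, ht]
    obtain ⟨m, hm⟩ := hH φ hφhyp
    refine ⟨m, fun i => ?_⟩
    have hai : (∑ j, A i j) ∈ Ideal.span (Set.range fun i : Fin k => ∑ j, A i j) :=
      Ideal.subset_span ⟨i, rfl⟩
    set ti : (Ideal.span (Set.range fun i : Fin k => ∑ j, A i j)) := ⟨∑ j, A i j, hai⟩
      with hti
    have h1 : φ ti = (∑ j, A i j) • m := hm ti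
    have h2 : φ ti = b i := by
      show φfun ti = b i
      rw [hwd ti (Pi.single i 1) ?_]
      · rw [Finset.sum_eq_single i]
        · simp
        · intro i' _ hne; simp [Pi.single_apply, hne]
        · intro h; exact absurd (Finset.mem_univ i) h
      · rw [Finset.sum_eq_single i]
        · simp [hti]
        · intro i' _ hne; simp [Pi.single_apply, hne]
        · intro h; exact absurd (Finset.mem_univ i) h
    calc ∑ j, A i j • m = (∑ j, A i j) • m := (Finset.sum_smul).symm
      _ = b i := by rw [← h1, h2]
  · rintro ⟨m, hm⟩ r hr χ
    exact ⟨fun _ => m, fun _ _ => rfl, hm⟩
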